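/- Let (E, sim, ser) be a comtrace alphabet and let u, v be step sequences with u ≡ v. Then: (1) weight(u) = weight(v); (2) |u|_a = |v|_a for every a ∈ E; (3) u ÷_R a ≡ v ÷_R a for every a ∈ E (right cancellation); (4) u ÷_L a ≡ v ÷_L a for every a ∈ E (left cancellation); (5) π_D(u) ≡ π_D(v) for every D ⊆ E (projection). -/

import Mathlib

variable {E : Type*}

/-- A step over a comtrace alphabet `(E, sim, ser)`: a nonempty finite set of events,
pairwise related by `sim`. -/
def IsStep [DecidableEq E] (sim : E → E → Prop) (A : Finset E) : Prop :=
  A.Nonempty ∧ ∀ a ∈ A, ∀ b ∈ A, a ≠ b → sim a b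

/-- A step sequence: a finite list of steps. -/
def IsStepSeq [DecidableEq E] (sim : E → E → Prop) (u : List (Finset E)) : Prop :=
  ∀ A ∈ u, IsStep sim A

/-- The generating relation of comtrace congruence:
`w·A·z ≈ w·B·C·z` whenever `A`, `B`, `C` are steps with `B ∪ C = A` and `B × C ⊆ ser`. -/
def CTBase [DecidableEq E] (sim ser : E → E → Prop) (u v : List (Finset E)) : Prop :=
  ∃ (w z : List (Finset E)) (A B C : Finset E),
    IsStepSeq sim w ∧ IsStepSeq sim z ∧
    IsStep sim A ∧ IsStep sim B ∧ IsStep sim C ∧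
    B ∪ C = A ∧ (∀ b ∈ B, ∀ c ∈ C, ser b c) ∧
    u = w ++ A :: z ∧ v = w ++ B :: C :: z

/-- The least equivalence relation containing `base`. -/
def LeastEquiv {α : Type*} (base : α → α → Prop) (x y : α) : Prop :=
  ∀ c : α → α → Prop, Equivalence c → (∀ a b, base a b → c a b) → c x y

/-- Comtrace congruence: the least equivalence relation containing `CTBase`. -/
def CTEquiv [DecidableEq E] (sim ser : E → E → Prop) :
    List (Finset E) → List (Finset E) → Prop :=
  LeastEquiv (CTBase sim ser)

/-- The weight of a step sequence: the sum of the sizes of its steps. -/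
def weight (u : List (Finset E)) : ℕ := (u.map Finset.card).sum

/-- `occCount a u` is the number of steps of `u` containing `a`. -/
def occCount [DecidableEq E] (a : E) (u : List (Finset E)) : ℕ :=
  u.countP (fun A => decide (a ∈ A))

/-- Left cancellation of an event `a` from a step sequence. -/
def divL [DecidableEq E] (a : E) : List (Finset E) → List (Finset E)
  | [] => []
  | A :: w =>
    if a ∈ A then (if A = {a} then w else (A.erase a) :: w) else A :: divL a w

/-- Right cancellation of an event `a` from a step sequence. -/
def divR [DecidableEq E] (a : E) (u : List (Finset E)) : List (Finset E) :=
  (divL a u.reverse).reverse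

/-- Projection of a step sequence onto a set of events `D`. -/
def proj [DecidableEq E] (D : Finset E) : List (Finset E) → List (Finset E)
  | [] => []
  | A :: w => if A ∩ D = ∅ then proj D w else (A ∩ D) :: proj D w

section Aux
variable [DecidableEq E] {sim ser : E → E → Prop}

theorem ctequiv_refl (u : List (Finset E)) : CTEquiv sim ser u u :=
  fun _ hc _ => hc.refl u

theorem ctequiv_symm {u v} (h : CTEquiv sim ser u v) : CTEquiv sim ser v u :=
  fun c hc hb => hc.symm (h c hc hb)

theorem ctequiv_trans {u v w} (h1 : CTEquiv sim ser u v) (h2 : CTEquiv sim ser v w) :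
    CTEquiv sim ser u w :=
  fun c hc hb => hc.trans (h1 c hc hb) (h2 c hc hb)

theorem ctequiv_of_base {u v} (h : CTBase sim ser u v) : CTEquiv sim ser u v :=
  fun _ _ hb => hb u v h

theorem ctequiv_of_eq {u v : List (Finset E)} (h : u = v) : CTEquiv sim ser u v :=
  h ▸ ctequiv_refl u

-- step lemmas
theorem isStep_erase {A : Finset E} (hA : IsStep sim A) (ha : a ∈ A) (hne : A ≠ {a}) :
    IsStep sim (A.erase a) := by
  constructor
  · refine Finset.nonempty_iff_ne_empty.mpr fun h => hne ?_
    apply Finset.Subset.antisymm ?_ (Finset.singleton_subset_iff.mpr ha)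
    intro x hx
    rcases eq_or_ne x a with rfl | hxa
    · exact Finset.mem_singleton_self x
    · exact absurd (Finset.mem_erase.mpr ⟨hxa, hx⟩) (by simp [h])
  · intro x hx y hy hxy
    exact hA.2 x (Finset.mem_of_mem_erase hx) y (Finset.mem_of_mem_erase hy) hxy

theorem isStepSeq_divL {a : E} {w : List (Finset E)} (hw : IsStepSeq sim w) :
    IsStepSeq sim (divL a w) := by
  induction w with
  | nil => exact hw
  | cons A t ih =>
    have hA := hw A List.mem_cons_self
    have ht : IsStepSeq sim t := fun X hX => hw X (List.mem_cons_of_mem A hX)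
    intro X hX
    simp only [divL] at hX
    by_cases ha : a ∈ A
    · simp only [ha, if_true] at hX
      by_cases hs : A = {a}
      · simp only [hs, if_true] at hX; exact ht X hX
      · simp only [hs, if_false] at hX
        rcases List.mem_cons.mp hX with rfl | hX
        · exact isStep_erase hA ha hs
        · exact ht X hX
    · simp only [ha, if_false] at hX
      rcases List.mem_cons.mp hX with rfl | hX
      · exact hA
      · exact ih ht X hX

theorem divL_append_not_mem {a : E} {w s : List (Finset E)} (h : ∀ X ∈ w, a ∉ X) :
    divL a (w ++ s) = w ++ divL a s := by
  induction w with
  | nil => rfl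
  | cons A t ih =>
    have ha : a ∉ A := h A List.mem_cons_self
    simp [divL, ha, ih (fun X hX => h X (List.mem_cons_of_mem A hX))]

theorem divL_append_mem {a : E} {w s : List (Finset E)} (h : ∃ X ∈ w, a ∈ X) :
    divL a (w ++ s) = divL a w ++ s := by
  induction w with
  | nil => rcases h with ⟨X, hX, _⟩; exact (List.not_mem_nil hX).elim
  | cons A t ih =>
    by_cases ha : a ∈ A
    · by_cases hs : A = {a} <;> simp [divL, ha, hs]
    · rcases h with ⟨X, hX, haX⟩
      rcases List.mem_cons.mp hX with rfl | hX
      · exact absurd haX ha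
      · simp [divL, ha, ih ⟨X, hX, haX⟩]

theorem ctbase_divL (hsim_irr : ∀ a, ¬ sim a a) (hser_sub : ∀ a b, ser a b → sim a b)
    {u v : List (Finset E)} (h : CTBase sim ser u v) (a : E) :
    CTEquiv sim ser (divL a u) (divL a v) := by
  obtain ⟨w, z, A, B, C, hw, hz, hA, hB, hC, hBC, hser, hu, hv⟩ := h
  subst hu hv
  have hdisj : ∀ x, x ∈ B → x ∈ C → False := fun x hb hc =>
    hsim_irr x (hser_sub x x (hser x hb x hc))
  by_cases hocc : ∃ X ∈ w, a ∈ X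
  · rw [divL_append_mem hocc, divL_append_mem hocc]
    exact ctequiv_of_base ⟨divL a w, z, A, B, C, isStepSeq_divL hw, hz, hA, hB, hC,
      hBC, hser, rfl, rfl⟩
  · push_neg at hocc
    rw [divL_append_not_mem hocc, divL_append_not_mem hocc]
    by_cases haA : a ∈ A
    · have haBC : a ∈ B ∨ a ∈ C := by
        rw [← hBC] at haA; exact Finset.mem_union.mp haA
      rcases haBC with haB | haC
      · have haC : a ∉ C := fun hc => hdisj a haB hc
        have hAne : A ≠ {a} := by
          intro hAs
          have : C ⊆ {a} := hAs ▸ hBC ▸ Finset.subset_union_right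
          rcases Finset.subset_singleton_iff.mp this with h0 | h0
          · exact hC.1.ne_empty h0
          · exact haC (h0 ▸ Finset.mem_singleton_self a)
        by_cases hBs : B = {a}
        · have : A.erase a = C := by
            rw [← hBC, hBs, Finset.erase_union_distrib, Finset.erase_singleton,
              Finset.erase_eq_of_notMem haC, Finset.empty_union]
          simp only [divL, haA, haB, hAne, hBs, if_true, if_false, this]
          simp [this]
          exact ctequiv_refl _
        · have hun : (B.erase a) ∪ C = A.erase a := by
            rw [← hBC, Finset.erase_union_distrib, Finset.erase_eq_of_notMem haC]
          simp only [divL, haA, haB, hAne, hBs, if_true, if_false]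
          exact ctequiv_of_base ⟨w, z, A.erase a, B.erase a, C, hw, hz,
            isStep_erase hA haA hAne, isStep_erase hB haB hBs, hC, hun,
            fun b hb c hc => hser b (Finset.mem_of_mem_erase hb) c hc, rfl, rfl⟩
      · have haB : a ∉ B := fun hb => hdisj a hb haC
        have hAne : A ≠ {a} := by
          intro hAs
          have : B ⊆ {a} := hAs ▸ hBC ▸ Finset.subset_union_left
          rcases Finset.subset_singleton_iff.mp this with h0 | h0
          · exact hB.1.ne_empty h0
          · exact haB (h0 ▸ Finset.mem_singleton_self a)
        by_cases hCs : C = {a}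
        · have : A.erase a = B := by
            rw [← hBC, hCs, Finset.erase_union_distrib, Finset.erase_singleton,
              Finset.erase_eq_of_notMem haB, Finset.union_empty]
          simp only [divL, haA, haB, haC, hAne, hCs, if_true, if_false]
          simp [this]
          exact ctequiv_refl _
        · have hun : B ∪ (C.erase a) = A.erase a := by
            rw [← hBC, Finset.erase_union_distrib, Finset.erase_eq_of_notMem haB]
          simp only [divL, haA, haB, haC, hAne, hCs, if_true, if_false]
          exact ctequiv_of_base ⟨w, z, A.erase a, B, C.erase a, hw, hz,
            isStep_erase hA haA hAne, hB, isStep_erase hC haC hCs, hun,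
            fun b hb c hc => hser b hb c (Finset.mem_of_mem_erase hc), rfl, rfl⟩
    · have haB : a ∉ B := fun hb => haA (hBC ▸ Finset.mem_union_left C hb)
      have haC : a ∉ C := fun hc => haA (hBC ▸ Finset.mem_union_right B hc)
      simp only [divL, haA, haB, haC, if_false]
      exact ctequiv_of_base ⟨w, divL a z, A, B, C, hw, isStepSeq_divL hz, hA, hB, hC,
        hBC, hser, rfl, rfl⟩

theorem ctequiv_divL (hsim_irr : ∀ a, ¬ sim a a) (hser_sub : ∀ a b, ser a b → sim a b)
    {u v : List (Finset E)} (h : CTEquiv sim ser u v) (a : E) :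
    CTEquiv sim ser (divL a u) (divL a v) := by
  refine h (fun x y => CTEquiv sim ser (divL a x) (divL a y))
    ⟨fun x => ctequiv_refl _, ctequiv_symm, ctequiv_trans⟩
    (fun x y hb => ctbase_divL hsim_irr hser_sub hb a)

theorem ctbase_reverse {u v : List (Finset E)} (h : CTBase sim ser u v) :
    CTBase sim (Function.swap ser) u.reverse v.reverse := by
  obtain ⟨w, z, A, B, C, hw, hz, hA, hB, hC, hBC, hser, hu, hv⟩ := h
  subst hu hv
  refine ⟨z.reverse, w.reverse, A, C, B,
    fun X hX => hz X (List.mem_reverse.mp hX),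
    fun X hX => hw X (List.mem_reverse.mp hX),
    hA, hC, hB, by rw [Finset.union_comm]; exact hBC,
    fun c hc b hb => hser b hb c hc, ?_, ?_⟩ <;> simp

theorem ctequiv_reverse {u v : List (Finset E)} (h : CTEquiv sim ser u v) :
    CTEquiv sim (Function.swap ser) u.reverse v.reverse := by
  refine h (fun x y => CTEquiv sim (Function.swap ser) x.reverse y.reverse)
    ⟨fun x => ctequiv_refl _, ctequiv_symm, ctequiv_trans⟩
    (fun x y hb => ctequiv_of_base (ctbase_reverse hb))

theorem ctbase_weight (hsim_irr : ∀ a, ¬ sim a a) (hser_sub : ∀ a b, ser a b → sim a b)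
    {u v : List (Finset E)} (h : CTBase sim ser u v) : weight u = weight v := by
  obtain ⟨w, z, A, B, C, hw, hz, hA, hB, hC, hBC, hser, hu, hv⟩ := h
  subst hu hv
  have hdisj : Disjoint B C := Finset.disjoint_left.mpr
    (fun {x} hb hc => hsim_irr x (hser_sub x x (hser x hb x hc)))
  have : A.card = B.card + C.card := by
    rw [← hBC, Finset.card_union_of_disjoint hdisj]
  simp [weight, this]
  omega

theorem ctbase_occ (hsim_irr : ∀ a, ¬ sim a a) (hser_sub : ∀ a b, ser a b → sim a b)
    {u v : List (Finset E)} (h : CTBase sim ser u v) (a : E) :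
    occCount a u = occCount a v := by
  obtain ⟨w, z, A, B, C, hw, hz, hA, hB, hC, hBC, hser, hu, hv⟩ := h
  subst hu hv
  have hdisj : ∀ x, x ∈ B → x ∈ C → False := fun x hb hc =>
    hsim_irr x (hser_sub x x (hser x hb x hc))
  have hmem : a ∈ A ↔ a ∈ B ∨ a ∈ C := by rw [← hBC, Finset.mem_union]
  simp only [occCount, List.countP_append, List.countP_cons]
  by_cases hb : a ∈ B <;> by_cases hc : a ∈ C
  · exact absurd (hdisj a hb hc) (fun h => h)
  · simp [hb, hc, hmem.mpr (Or.inl hb)]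
  · simp [hb, hc, hmem.mpr (Or.inr hc)]
  · have : a ∉ A := fun h => (hmem.mp h).elim hb hc
    simp [hb, hc, this]

theorem isStep_inter {A D : Finset E} (hA : IsStep sim A) (hne : A ∩ D ≠ ∅) :
    IsStep sim (A ∩ D) :=
  ⟨Finset.nonempty_iff_ne_empty.mpr hne,
   fun x hx y hy hxy => hA.2 x (Finset.mem_of_mem_inter_left hx)
     y (Finset.mem_of_mem_inter_left hy) hxy⟩

theorem isStepSeq_proj {D : Finset E} {w : List (Finset E)} (hw : IsStepSeq sim w) :
    IsStepSeq sim (proj D w) := by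
  induction w with
  | nil => exact hw
  | cons A t ih =>
    have hA := hw A List.mem_cons_self
    have ht : IsStepSeq sim t := fun X hX => hw X (List.mem_cons_of_mem A hX)
    intro X hX
    simp only [proj] at hX
    by_cases hAD : A ∩ D = ∅
    · simp only [hAD, if_true] at hX; exact ih ht X hX
    · simp only [hAD, if_false] at hX
      rcases List.mem_cons.mp hX with rfl | hX
      · exact isStep_inter hA hAD
      · exact ih ht X hX

theorem proj_append {D : Finset E} (w s : List (Finset E)) :
    proj D (w ++ s) = proj D w ++ proj D s := by
  induction w with
  | nil => rfl
  | cons A t ih => by_cases hAD : A ∩ D = ∅ <;> simp [proj, hAD, ih]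

theorem ctbase_proj {u v : List (Finset E)} (h : CTBase sim ser u v) (D : Finset E) :
    CTEquiv sim ser (proj D u) (proj D v) := by
  obtain ⟨w, z, A, B, C, hw, hz, hA, hB, hC, hBC, hser, hu, hv⟩ := h
  subst hu hv
  rw [proj_append, proj_append]
  have hAD : A ∩ D = (B ∩ D) ∪ (C ∩ D) := by
    rw [← hBC, Finset.union_inter_distrib_right]
  by_cases hBD : B ∩ D = ∅ <;> by_cases hCD : C ∩ D = ∅
  · have : A ∩ D = ∅ := by rw [hAD, hBD, hCD, Finset.union_empty]
    simp only [proj, hBD, hCD, this, if_true]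
    exact ctequiv_refl _
  · have h1 : A ∩ D = C ∩ D := by rw [hAD, hBD, Finset.empty_union]
    have h2 : A ∩ D ≠ ∅ := h1 ▸ hCD
    simp only [proj, hBD, hCD, h2, if_true, if_false, h1]
    exact ctequiv_refl _
  · have h1 : A ∩ D = B ∩ D := by rw [hAD, hCD, Finset.union_empty]
    have h2 : A ∩ D ≠ ∅ := h1 ▸ hBD
    simp only [proj, hBD, hCD, h2, if_true, if_false, h1]
    exact ctequiv_refl _
  · have h2 : A ∩ D ≠ ∅ := by
      rw [hAD]
      intro he
      exact hBD (Finset.union_eq_empty.mp he).1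
    simp only [proj, hBD, hCD, h2, if_false]
    exact ctequiv_of_base ⟨proj D w, proj D z, A ∩ D, B ∩ D, C ∩ D,
      isStepSeq_proj hw, isStepSeq_proj hz, isStep_inter hA h2, isStep_inter hB hBD,
      isStep_inter hC hCD, hAD.symm,
      fun b hb c hc => hser b (Finset.mem_of_mem_inter_left hb) c (Finset.mem_of_mem_inter_left hc),
      rfl, rfl⟩

end Aux

/-- Basic algebraic properties of comtrace congruence: weight equality,
event-preservation, right and left cancellation, and projection. -/
theorem stmt4 [DecidableEq E] [Fintype E] (sim ser : E → E → Prop)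
    (hsim_irr : ∀ a, ¬ sim a a) (hsim_symm : ∀ a b, sim a b → sim b a)
    (hser_sub : ∀ a b, ser a b → sim a b)
    (u v : List (Finset E)) (hu : IsStepSeq sim u) (hv : IsStepSeq sim v)
    (huv : CTEquiv sim ser u v) :
    weight u = weight v ∧
    (∀ a : E, occCount a u = occCount a v) ∧
    (∀ a : E, CTEquiv sim ser (divR a u) (divR a v)) ∧
    (∀ a : E, CTEquiv sim ser (divL a u) (divL a v)) ∧
    (∀ D : Finset E, CTEquiv sim ser (proj D u) (proj D v)) := by
  have hser_sub' : ∀ a b, Function.swap ser a b → sim a b :=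
    fun a b h => hsim_symm b a (hser_sub b a h)
  refine ⟨?_, ?_, ?_, ?_, ?_⟩
  · exact huv (fun x y => weight x = weight y) ⟨fun _ => rfl, Eq.symm, Eq.trans⟩
      (fun x y hb => ctbase_weight hsim_irr hser_sub hb)
  · exact huv (fun x y => ∀ a, occCount a x = occCount a y)
      ⟨fun _ _ => rfl, fun h a => (h a).symm, fun h1 h2 a => (h1 a).trans (h2 a)⟩
      (fun x y hb a => ctbase_occ hsim_irr hser_sub hb a)
  · intro a
    have h1 := ctequiv_reverse huv
    have h2 := ctequiv_divL hsim_irr hser_sub' h1 a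
    have h3 := ctequiv_reverse h2
    exact h3
  · intro a
    exact ctequiv_divL hsim_irr hser_sub huv a
  · intro D
    refine huv (fun x y => ∀ D, CTEquiv sim ser (proj D x) (proj D y))
      ⟨fun _ _ => ctequiv_refl _, fun h D => ctequiv_symm (h D),
       fun h1 h2 D => ctequiv_trans (h1 D) (h2 D)⟩
      (fun x y hb D => ctbase_proj hb D) D
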